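/- arXiv:1003.0251 — 3 statements merged into one kernel-verified Lean document; each statement's English description precedes it below -/
import Mathlib

section
/- For every δ with 0 ≤ δ < 3/(4 + √6) there exist constants D₁, D₂ > 0 depending only on δ with the following property. Let m, N, s ∈ ℕ and let Ψ ∈ ℂ^{m×N} be a matrix whose restricted isometry constant of order 2s satisfies δ_{2s} ≤ δ. Let x ∈ ℂ^N, ε ≥ 0, and η ∈ ℂ^m with ‖η‖₂ ≤ ε, and set y = Ψx + η. Then every minimizer x# of ‖z‖₁ over the set {z ∈ ℂ^N : ‖Ψz − y‖₂ ≤ ε} satisfies ‖x − x#‖₁ ≤ D₁·σ_s(x)₁ + D₂·√s·ε. -/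
open MeasureTheory Finset Real

noncomputable section

/-- The `ℓ_p` norm of a vector `x ∈ ℂ^N`. -/
def lpNormC {N : ℕ} (p : ℝ) (x : Fin N → ℂ) : ℝ :=
  (∑ j, ‖x j‖ ^ p) ^ (1 / p)

/-- A vector is `s`-sparse if it has at most `s` nonzero entries. -/
def IsSparseC {N : ℕ} (s : ℕ) (y : Fin N → ℂ) : Prop :=
  ∃ T : Finset (Fin N), T.card ≤ s ∧ ∀ j ∉ T, y j = 0

/-- Error of best `s`-term approximation in the `ℓ_p` norm. -/
def bestApproxC {N : ℕ} (s : ℕ) (p : ℝ) (x : Fin N → ℂ) : ℝ :=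
  sInf { t | ∃ y : Fin N → ℂ, IsSparseC s y ∧ t = lpNormC p (x - y) }

/-- `HasRIPBound s δ Ψ` states that the restricted isometry constant `δ_s` of `Ψ` satisfies
`δ_s ≤ δ`, i.e. `(1-δ)‖c‖₂² ≤ ‖Ψc‖₂² ≤ (1+δ)‖c‖₂²` for all `s`-sparse vectors `c`. -/
def HasRIPBound {m N : ℕ} (s : ℕ) (δ : ℝ) (Ψ : Matrix (Fin m) (Fin N) ℂ) : Prop :=
  ∀ c : Fin N → ℂ, IsSparseC s c →
    (1 - δ) * lpNormC 2 c ^ 2 ≤ lpNormC 2 (Ψ.mulVec c) ^ 2 ∧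
    lpNormC 2 (Ψ.mulVec c) ^ 2 ≤ (1 + δ) * lpNormC 2 c ^ 2

/-- `c` minimizes the `ℓ₁`-norm over the set `S`. -/
def IsL1MinOnC {N : ℕ} (S : Set (Fin N → ℂ)) (c : Fin N → ℂ) : Prop :=
  c ∈ S ∧ ∀ z ∈ S, lpNormC 1 c ≤ lpNormC 1 z

namespace RIPAux

def S1 {N : ℕ} (x : Fin N → ℂ) : ℝ := ∑ j, ‖x j‖
def S2 {N : ℕ} (x : Fin N → ℂ) : ℝ := ∑ j, ‖x j‖ ^ 2
def ipR {m : ℕ} (u v : Fin m → ℂ) : ℝ := ∑ i, (u i * (starRingEnd ℂ) (v i)).re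

variable {m N : ℕ}

lemma S1_nonneg (x : Fin N → ℂ) : 0 ≤ S1 x :=
  Finset.sum_nonneg fun _ _ => norm_nonneg _

lemma S2_nonneg (x : Fin N → ℂ) : 0 ≤ S2 x :=
  Finset.sum_nonneg fun _ _ => sq_nonneg _

lemma lpNormC_one (x : Fin N → ℂ) : lpNormC 1 x = S1 x := by
  unfold lpNormC S1
  simp [Real.rpow_one]

lemma lpNormC_two (x : Fin N → ℂ) : lpNormC 2 x = Real.sqrt (S2 x) := by
  unfold lpNormC S2
  rw [Real.sqrt_eq_rpow]
  congr 1
  refine Finset.sum_congr rfl fun j _ => ?_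
  rw [show (2:ℝ) = ((2:ℕ):ℝ) by norm_num, Real.rpow_natCast]

lemma lpNormC_two_sq (x : Fin N → ℂ) : lpNormC 2 x ^ 2 = S2 x := by
  rw [lpNormC_two, Real.sq_sqrt (S2_nonneg x)]

lemma ipR_self (u : Fin m → ℂ) : ipR u u = S2 u := by
  unfold ipR S2
  refine Finset.sum_congr rfl fun i _ => ?_
  rw [Complex.mul_conj, Complex.sq_norm]
  simp

lemma ipR_add_right (u v w : Fin m → ℂ) : ipR u (v + w) = ipR u v + ipR u w := by
  unfold ipR
  rw [← Finset.sum_add_distrib]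
  refine Finset.sum_congr rfl fun i _ => ?_
  simp [mul_add]

lemma ipR_le (u v : Fin m → ℂ) : ipR u v ≤ Real.sqrt (S2 u) * Real.sqrt (S2 v) := by
  have h1 : ipR u v ≤ ∑ i, ‖u i‖ * ‖v i‖ := by
    refine Finset.sum_le_sum fun i _ => ?_
    calc (u i * (starRingEnd ℂ) (v i)).re ≤ ‖u i * (starRingEnd ℂ) (v i)‖ :=
          Complex.re_le_norm _
      _ = ‖u i‖ * ‖v i‖ := by
          rw [norm_mul, Complex.norm_conj]
  have h2 : (∑ i, ‖u i‖ * ‖v i‖)^2 ≤ S2 u * S2 v :=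
    Finset.sum_mul_sq_le_sq_mul_sq _ _ _
  have h3 : (0:ℝ) ≤ ∑ i, ‖u i‖ * ‖v i‖ :=
    Finset.sum_nonneg fun i _ => mul_nonneg (norm_nonneg _) (norm_nonneg _)
  calc ipR u v ≤ ∑ i, ‖u i‖ * ‖v i‖ := h1
    _ = Real.sqrt ((∑ i, ‖u i‖ * ‖v i‖)^2) := (Real.sqrt_sq h3).symm
    _ ≤ Real.sqrt (S2 u * S2 v) := Real.sqrt_le_sqrt h2
    _ = Real.sqrt (S2 u) * Real.sqrt (S2 v) := Real.sqrt_mul (S2_nonneg u) _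

lemma sqrtS2_add_le (u v : Fin m → ℂ) :
    Real.sqrt (S2 (u + v)) ≤ Real.sqrt (S2 u) + Real.sqrt (S2 v) := by
  have hexp : S2 (u + v) = S2 u + S2 v + 2 * ipR u v := by
    unfold S2 ipR
    rw [← Finset.sum_add_distrib, Finset.mul_sum, ← Finset.sum_add_distrib]
    refine Finset.sum_congr rfl fun i _ => ?_
    simp only [Pi.add_apply, Complex.sq_norm]
    rw [Complex.normSq_add]
  have h2 : S2 (u + v) ≤ (Real.sqrt (S2 u) + Real.sqrt (S2 v))^2 := by
    have := ipR_le u v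
    have h3 : Real.sqrt (S2 u) ^ 2 = S2 u := Real.sq_sqrt (S2_nonneg u)
    have h4 : Real.sqrt (S2 v) ^ 2 = S2 v := Real.sq_sqrt (S2_nonneg v)
    nlinarith [this]
  calc Real.sqrt (S2 (u+v)) ≤ Real.sqrt ((Real.sqrt (S2 u) + Real.sqrt (S2 v))^2) :=
        Real.sqrt_le_sqrt h2
    _ = Real.sqrt (S2 u) + Real.sqrt (S2 v) :=
        Real.sqrt_sq (by positivity)

def mask (T : Finset (Fin N)) (x : Fin N → ℂ) : Fin N → ℂ := fun j => if j ∈ T then x j else 0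

lemma mask_add_compl (T : Finset (Fin N)) (x : Fin N → ℂ) : mask T x + mask Tᶜ x = x := by
  funext j
  by_cases h : j ∈ T <;> simp [mask, h]

lemma S1_mask (T : Finset (Fin N)) (x : Fin N → ℂ) :
    S1 (mask T x) = ∑ j ∈ T, ‖x j‖ := by
  unfold S1 mask
  rw [← Finset.sum_filter_add_sum_filter_not univ (· ∈ T)]
  simp only [Finset.filter_mem_eq_inter, Finset.univ_inter]
  have h1 : ∑ j ∈ T, ‖if j ∈ T then x j else 0‖
      = ∑ j ∈ T, ‖x j‖ := Finset.sum_congr rfl fun j hj => by simp [hj]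
  have h2 : ∑ j ∈ univ.filter (¬ · ∈ T), ‖if j ∈ T then x j else 0‖ = 0 := by
    refine Finset.sum_eq_zero fun j hj => ?_
    simp only [Finset.mem_filter] at hj
    simp [hj.2]
  rw [h1, h2, add_zero]

lemma S2_mask (T : Finset (Fin N)) (x : Fin N → ℂ) :
    S2 (mask T x) = ∑ j ∈ T, ‖x j‖ ^ 2 := by
  unfold S2 mask
  rw [← Finset.sum_filter_add_sum_filter_not univ (· ∈ T)]
  simp only [Finset.filter_mem_eq_inter, Finset.univ_inter]
  have h1 : ∑ j ∈ T, ‖if j ∈ T then x j else 0‖ ^ 2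
      = ∑ j ∈ T, ‖x j‖ ^ 2 := Finset.sum_congr rfl fun j hj => by simp [hj]
  have h2 : ∑ j ∈ univ.filter (¬ · ∈ T), ‖if j ∈ T then x j else 0‖ ^ 2 = 0 := by
    refine Finset.sum_eq_zero fun j hj => ?_
    simp only [Finset.mem_filter] at hj
    simp [hj.2]
  rw [h1, h2, add_zero]

lemma S1_split (T : Finset (Fin N)) (x : Fin N → ℂ) :
    S1 x = S1 (mask T x) + S1 (mask Tᶜ x) := by
  rw [S1_mask, S1_mask]
  unfold S1
  rw [← Finset.sum_add_sum_compl T]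

end RIPAux

namespace RIPAux2
variable {N : ℕ}

lemma quad_bound (A B C t : ℝ) (hA : 0 < A) (hB : 0 ≤ B) (hC : 0 ≤ C) (ht : 0 ≤ t)
    (h : A * t^2 ≤ B * t + C) : t ≤ B / A + Real.sqrt (C / A) := by
  by_contra hlt
  push_neg at hlt
  set q := Real.sqrt (C / A) with hq
  set r := B / A with hr
  have hq2 : q ^ 2 = C / A := Real.sq_sqrt (div_nonneg hC hA.le)
  have hq0 : 0 ≤ q := Real.sqrt_nonneg _
  have hr0 : 0 ≤ r := div_nonneg hB hA.le
  have ht' : 0 < t := lt_of_le_of_lt (by positivity) hlt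
  have hC' : C = A * q ^ 2 := by rw [hq2]; field_simp
  have hB' : B = A * r := by rw [hr]; field_simp
  have hdiv : t ^ 2 ≤ r * t + q ^ 2 := by
    rw [hB', hC'] at h
    have := (mul_le_mul_iff_right₀ hA).mp (by linarith : A * (t^2) ≤ A * (r * t + q ^ 2))
    linarith
  nlinarith [mul_lt_mul_of_pos_right hlt ht', mul_le_mul_of_nonneg_left hlt.le hq0]

lemma exists_top (h : Fin N → ℂ) (s : ℕ) :
    ∃ T : Finset (Fin N), T.card = min s N ∧
      ∀ i ∈ T, ∀ j, j ∉ T → ‖h j‖ ≤ ‖h i‖ := by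
  induction s with
  | zero => exact ⟨∅, by simp, by simp⟩
  | succ s ih =>
    obtain ⟨T, hcard, hprop⟩ := ih
    by_cases hT : T = univ
    · refine ⟨T, ?_, hprop⟩
      have hN : T.card = N := by rw [hT]; simp
      omega
    · have hcardlt : T.card < N := by
        have := Finset.card_lt_card (Finset.ssubset_univ_iff.mpr hT)
        simpa using this
      have hne : Tᶜ.Nonempty := by
        rw [← Finset.card_pos, Finset.card_compl]
        simp only [Fintype.card_fin]
        omega
      obtain ⟨i0, hi0, hmax⟩ := Finset.exists_max_image Tᶜ (fun j => ‖h j‖) hne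
      have hi0T : i0 ∉ T := Finset.mem_compl.mp hi0
      refine ⟨insert i0 T, ?_, ?_⟩
      · rw [Finset.card_insert_of_notMem hi0T, hcard]
        omega
      · intro i hi j hj
        have hjT : j ∉ T := fun hc => hj (Finset.mem_insert_of_mem hc)
        rcases Finset.mem_insert.mp hi with rfl | hiT
        · exact hmax j (Finset.mem_compl.mpr hjT)
        · exact hprop i hiT j hjT

lemma top_sum_ge (h : Fin N → ℂ) (T0 : Finset (Fin N))
    (htop : ∀ i ∈ T0, ∀ j, j ∉ T0 → ‖h j‖ ≤ ‖h i‖)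
    (S : Finset (Fin N)) (hcard : S.card ≤ T0.card) :
    ∑ j ∈ S, ‖h j‖ ≤ ∑ j ∈ T0, ‖h j‖ := by
  have hsplitS : ∑ j ∈ S, ‖h j‖
      = ∑ j ∈ S ∩ T0, ‖h j‖ + ∑ j ∈ S \ T0, ‖h j‖ := by
    rw [Finset.sum_inter_add_sum_sdiff]
  have hsplitT : ∑ j ∈ T0, ‖h j‖
      = ∑ j ∈ T0 ∩ S, ‖h j‖ + ∑ j ∈ T0 \ S, ‖h j‖ := by
    rw [Finset.sum_inter_add_sum_sdiff]
  have hint : S ∩ T0 = T0 ∩ S := Finset.inter_comm S T0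
  have hcard2 : (S \ T0).card ≤ (T0 \ S).card := by
    have h1 : (S \ T0).card + (S ∩ T0).card = S.card := Finset.card_sdiff_add_card_inter S T0
    have h2 : (T0 \ S).card + (T0 ∩ S).card = T0.card := Finset.card_sdiff_add_card_inter T0 S
    rw [hint] at h1
    omega
  have key : ∑ j ∈ S \ T0, ‖h j‖ ≤ ∑ j ∈ T0 \ S, ‖h j‖ := by
    rcases Finset.eq_empty_or_nonempty (T0 \ S) with he | hne
    · have : (S \ T0).card = 0 := by rw [he] at hcard2; simpa using hcard2
      rw [Finset.card_eq_zero] at this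
      rw [this, he]
    · obtain ⟨i1, hi1, hmin⟩ := Finset.exists_min_image (T0 \ S) (fun j => ‖h j‖) hne
      have hi1T0 : i1 ∈ T0 := (Finset.mem_sdiff.mp hi1).1
      calc ∑ j ∈ S \ T0, ‖h j‖
          ≤ (S \ T0).card • ‖h i1‖ := by
            refine Finset.sum_le_card_nsmul _ _ _ fun j hj => ?_
            exact htop i1 hi1T0 j (Finset.mem_sdiff.mp hj).2
        _ ≤ (T0 \ S).card • ‖h i1‖ :=
            nsmul_le_nsmul_left (norm_nonneg _) hcard2
        _ ≤ ∑ j ∈ T0 \ S, ‖h j‖ :=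
            Finset.card_nsmul_le_sum _ _ _ fun j hj => hmin j hj
  rw [hsplitS, hsplitT, hint]
  linarith
end RIPAux2

namespace RIPAux
variable {m N : ℕ}
lemma ipR_smul_comb (u v v' : Fin m → ℂ) (c c' : ℝ) :
    ipR u ((c:ℂ) • v + (c':ℂ) • v') = c * ipR u v + c' * ipR u v' := by
  unfold ipR
  rw [Finset.mul_sum, Finset.mul_sum, ← Finset.sum_add_distrib]
  refine Finset.sum_congr rfl fun i _ => ?_
  simp only [Pi.add_apply, Pi.smul_apply, smul_eq_mul, map_add, map_mul, Complex.conj_ofReal,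
    mul_add, Complex.add_re]
  have hre : ∀ (r : ℝ) (z z' : ℂ), (z * ((r:ℂ) * z')).re = r * (z * z').re := by
    intro r z z'
    rw [show z * ((r:ℂ) * z') = (r:ℂ) * (z * z') from by ring]
    simp [Complex.mul_re]
  rw [hre, hre]

theorem key_lower (Ψ : Matrix (Fin m) (Fin N) ℂ) (s : ℕ) (δ α : ℝ)
    (hδ0 : 0 ≤ δ) (hα : 0 < α) (hrip : HasRIPBound (2*s) δ Ψ)
    (X : Fin N → ℂ) (hX : IsSparseC s X) :
    ∀ n (w : Fin N → ℂ),
      (univ.filter fun i => w i ≠ 0 ∧ ‖w i‖ ≠ α).card = n →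
      (∀ i, w i ≠ 0 → X i = 0) →
      (∀ i, ‖w i‖ ≤ α) → S1 w ≤ s * α →
      -(δ * (S2 X + s * α ^ 2)) / 2 ≤ ipR (Ψ.mulVec X) (Ψ.mulVec w) := by
  intro n
  induction n using Nat.strong_induction_on with
  | _ n IH =>
  intro w hn hdisj hbnd hsum
  by_cases hsmall : n ≤ 1
  · -- base case: w has at most s nonzero entries
    set F := univ.filter fun i => w i ≠ 0 ∧ ‖w i‖ ≠ α with hF
    set A := univ.filter fun i => ‖w i‖ = α with hA
    set SP := univ.filter fun i => w i ≠ 0 with hSP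
    have hsub : SP ⊆ A ∪ F := by
      intro i hi
      have hi' := (Finset.mem_filter.mp hi).2
      by_cases hc : ‖w i‖ = α
      · exact Finset.mem_union_left _ (Finset.mem_filter.mpr ⟨Finset.mem_univ _, hc⟩)
      · exact Finset.mem_union_right _ (Finset.mem_filter.mpr ⟨Finset.mem_univ _, hi', hc⟩)
    have hdisjAF : Disjoint A F := by
      rw [Finset.disjoint_left]
      intro i hiA hiF
      exact (Finset.mem_filter.mp hiF).2.2 (Finset.mem_filter.mp hiA).2
    have hsumA : ∑ i ∈ A, ‖w i‖ = A.card * α := by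
      rw [Finset.sum_congr rfl (fun i hi => (Finset.mem_filter.mp hi).2)]
      rw [Finset.sum_const, nsmul_eq_mul]
    have hle : ∑ i ∈ A ∪ F, ‖w i‖ ≤ S1 w := by
      refine Finset.sum_le_sum_of_subset_of_nonneg (Finset.subset_univ _) fun i _ _ =>
        norm_nonneg _
    rw [Finset.sum_union hdisjAF, hsumA] at hle
    have hsupp_card : SP.card ≤ s := by
      have hAcard : (A.card : ℝ) * α + ∑ i ∈ F, ‖w i‖ ≤ s * α := le_trans hle hsum
      have hFsum_nonneg : 0 ≤ ∑ i ∈ F, ‖w i‖ :=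
        Finset.sum_nonneg fun _ _ => norm_nonneg _
      interval_cases n
      · have hFe : F = ∅ := Finset.card_eq_zero.mp hn
        have : (A.card : ℝ) ≤ s := by
          rw [hFe] at hAcard
          simp at hAcard
          have := (mul_le_mul_iff_left₀ hα).mp hAcard
          exact this
        have hAs : A.card ≤ s := by exact_mod_cast this
        calc SP.card ≤ (A ∪ F).card := Finset.card_le_card hsub
          _ ≤ A.card + F.card := Finset.card_union_le _ _
          _ ≤ s := by omega
      · obtain ⟨j0, hj0⟩ := Finset.card_eq_one.mp hn
        have hj0F : j0 ∈ F := by rw [hj0]; exact Finset.mem_singleton_self _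
        have hj0pos : 0 < ‖w j0‖ :=
          norm_pos_iff.mpr (Finset.mem_filter.mp hj0F).2.1
        have hFsum : ∑ i ∈ F, ‖w i‖ = ‖w j0‖ := by
          rw [hj0, Finset.sum_singleton]
        have : (A.card : ℝ) * α < s * α := by rw [hFsum] at hAcard; linarith
        have hAs : A.card < s := by exact_mod_cast (mul_lt_mul_iff_left₀ hα).mp this
        calc SP.card ≤ (A ∪ F).card := Finset.card_le_card hsub
          _ ≤ A.card + F.card := Finset.card_union_le _ _
          _ ≤ s := by omega
    -- sparsity of X ± w
    obtain ⟨TX, hTXcard, hXoff⟩ := hX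
    have hwoff : ∀ j, j ∉ SP → w j = 0 := by
      intro j hj
      by_contra hc
      exact hj (Finset.mem_filter.mpr ⟨Finset.mem_univ _, hc⟩)
    have hsp_add : IsSparseC (2*s) (X + w) := by
      refine ⟨TX ∪ SP, le_trans (Finset.card_union_le _ _) (by omega), fun j hj => ?_⟩
      have hj1 : j ∉ TX := fun hc => hj (Finset.mem_union_left _ hc)
      have hj2 : j ∉ SP := fun hc => hj (Finset.mem_union_right _ hc)
      simp [hXoff j hj1, hwoff j hj2]
    have hsp_sub : IsSparseC (2*s) (X - w) := by
      refine ⟨TX ∪ SP, le_trans (Finset.card_union_le _ _) (by omega), fun j hj => ?_⟩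
      have hj1 : j ∉ TX := fun hc => hj (Finset.mem_union_left _ hc)
      have hj2 : j ∉ SP := fun hc => hj (Finset.mem_union_right _ hc)
      simp [hXoff j hj1, hwoff j hj2]
    have hdisj' : ∀ j, X j = 0 ∨ w j = 0 := by
      intro j
      by_cases hw : w j = 0
      · exact Or.inr hw
      · exact Or.inl (hdisj j hw)
    have hS2add : S2 (X + w) = S2 X + S2 w := by
      unfold S2
      rw [← Finset.sum_add_distrib]
      refine Finset.sum_congr rfl fun j _ => ?_
      rcases hdisj' j with h0 | h0 <;> simp [h0]
    have hS2sub : S2 (X - w) = S2 X + S2 w := by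
      unfold S2
      rw [← Finset.sum_add_distrib]
      refine Finset.sum_congr rfl fun j _ => ?_
      rcases hdisj' j with h0 | h0 <;> simp [h0]
    have h1 := hrip (X + w) hsp_add
    have h2 := hrip (X - w) hsp_sub
    rw [lpNormC_two_sq, lpNormC_two_sq, hS2add] at h1
    rw [lpNormC_two_sq, lpNormC_two_sq, hS2sub] at h2
    have hiden : S2 (Ψ.mulVec (X + w)) - S2 (Ψ.mulVec (X - w))
        = 4 * ipR (Ψ.mulVec X) (Ψ.mulVec w) := by
      rw [Matrix.mulVec_add, Matrix.mulVec_sub]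
      unfold S2 ipR
      rw [Finset.mul_sum, ← Finset.sum_sub_distrib]
      refine Finset.sum_congr rfl fun i _ => ?_
      simp only [Pi.add_apply, Pi.sub_apply, Complex.sq_norm]
      rw [Complex.normSq_add, Complex.normSq_sub]
      ring
    have hS2w : S2 w ≤ s * α ^ 2 := by
      have hstep : S2 w ≤ α * S1 w := by
        unfold S2 S1
        rw [Finset.mul_sum]
        refine Finset.sum_le_sum fun i _ => ?_
        rw [pow_two]
        exact mul_le_mul_of_nonneg_right (hbnd i) (norm_nonneg _)
      have : α * S1 w ≤ α * (s * α) := mul_le_mul_of_nonneg_left hsum hα.le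
      nlinarith
    have hmono : δ * S2 w ≤ δ * (s * α ^ 2) := mul_le_mul_of_nonneg_left hS2w hδ0
    have hS2X := S2_nonneg X
    have hS2w0 := S2_nonneg w
    nlinarith [h1.1, h2.2, hiden]
  · -- inductive step : split w into two vectors with fewer "fractional" entries
    push_neg at hsmall
    have h2 : 1 < (univ.filter fun i => w i ≠ 0 ∧ ‖w i‖ ≠ α).card := by omega
    obtain ⟨j, hjF, k, hkF, hjk⟩ := Finset.one_lt_card.mp h2
    have hjF' := (Finset.mem_filter.mp hjF).2
    have hkF' := (Finset.mem_filter.mp hkF).2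
    set wj := ‖w j‖ with hwj
    set wk := ‖w k‖ with hwk
    have hwj0 : 0 < wj := norm_pos_iff.mpr hjF'.1
    have hwk0 : 0 < wk := norm_pos_iff.mpr hkF'.1
    have hwjα : wj < α := lt_of_le_of_ne (hbnd j) hjF'.2
    have hwkα : wk < α := lt_of_le_of_ne (hbnd k) hkF'.2
    set t1 := min (α - wj) wk with ht1def
    set t2 := min wj (α - wk) with ht2def
    have ht1 : 0 < t1 := lt_min (by linarith) hwk0
    have ht2 : 0 < t2 := lt_min hwj0 (by linarith)
    have ht1a : t1 ≤ α - wj := min_le_left _ _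
    have ht1b : t1 ≤ wk := min_le_right _ _
    have ht2a : t2 ≤ wj := min_le_left _ _
    have ht2b : t2 ≤ α - wk := min_le_right _ _
    set lam := t2 / (t1 + t2) with hlamdef
    have hsumt : 0 < t1 + t2 := by linarith
    have hlam0 : 0 ≤ lam := div_nonneg ht2.le hsumt.le
    have hlam1 : lam ≤ 1 := by
      rw [hlamdef, div_le_one hsumt]; linarith
    have hkey : lam * t1 - (1 - lam) * t2 = 0 := by
      rw [hlamdef]; field_simp; ring
    set ca : Fin N → ℝ := fun i => if i = j then (wj + t1)/wj else if i = k then (wk - t1)/wk else 1 with hca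
    set cb : Fin N → ℝ := fun i => if i = j then (wj - t2)/wj else if i = k then (wk + t2)/wk else 1 with hcb
    set a : Fin N → ℂ := fun i => (ca i : ℂ) * w i with haf
    set b : Fin N → ℂ := fun i => (cb i : ℂ) * w i with hbf
    have hca0 : ∀ i, 0 ≤ ca i := by
      intro i
      rw [hca]
      dsimp only
      split
      · positivity
      · split
        · apply div_nonneg (by linarith) hwk0.le
        · norm_num
    have hcb0 : ∀ i, 0 ≤ cb i := by
      intro i
      rw [hcb]
      dsimp only
      split
      · apply div_nonneg (by linarith) hwj0.le
      · split
        · positivity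
        · norm_num
    have habs_a : ∀ i, ‖a i‖ = ca i * ‖w i‖ := by
      intro i
      rw [haf]
      dsimp only
      rw [norm_mul, Complex.norm_real, Real.norm_eq_abs, abs_of_nonneg (hca0 i)]
    have habs_b : ∀ i, ‖b i‖ = cb i * ‖w i‖ := by
      intro i
      rw [hbf]
      dsimp only
      rw [norm_mul, Complex.norm_real, Real.norm_eq_abs, abs_of_nonneg (hcb0 i)]
    have hcaj : ca j = (wj + t1)/wj := by simp [hca]
    have hcak : ca k = (wk - t1)/wk := by simp [hca, hjk.symm]
    have hcbj : cb j = (wj - t2)/wj := by simp [hcb]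
    have hcbk : cb k = (wk + t2)/wk := by simp [hcb, hjk.symm]
    have hcao : ∀ i, i ≠ j → i ≠ k → ca i = 1 := by
      intro i h1 h2; rw [hca]; simp [h1, h2]
    have hcbo : ∀ i, i ≠ j → i ≠ k → cb i = 1 := by
      intro i h1 h2; rw [hcb]; simp [h1, h2]
    have habs_aj : ‖a j‖ = wj + t1 := by
      rw [habs_a, hcaj, ← hwj, div_mul_cancel₀ _ hwj0.ne']
    have habs_ak : ‖a k‖ = wk - t1 := by
      rw [habs_a, hcak, ← hwk, div_mul_cancel₀ _ hwk0.ne']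
    have habs_bj : ‖b j‖ = wj - t2 := by
      rw [habs_b, hcbj, ← hwj, div_mul_cancel₀ _ hwj0.ne']
    have habs_bk : ‖b k‖ = wk + t2 := by
      rw [habs_b, hcbk, ← hwk, div_mul_cancel₀ _ hwk0.ne']
    have hao : ∀ i, i ≠ j → i ≠ k → a i = w i := by
      intro i h1 h2; rw [haf]; dsimp only; rw [hcao i h1 h2]; simp
    have hbo : ∀ i, i ≠ j → i ≠ k → b i = w i := by
      intro i h1 h2; rw [hbf]; dsimp only; rw [hcbo i h1 h2]; simp
    -- coefficient identity
    have hcoef : ∀ i, lam * ca i + (1 - lam) * cb i = 1 := by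
      intro i
      by_cases h1 : i = j
      · subst h1
        rw [hcaj, hcbj]
        have : lam * ((wj + t1)/wj) + (1 - lam) * ((wj - t2)/wj)
            = (wj + (lam * t1 - (1 - lam) * t2))/wj := by ring
        rw [this, hkey, add_zero, div_self hwj0.ne']
      by_cases h2 : i = k
      · subst h2
        rw [hcak, hcbk]
        have : lam * ((wk - t1)/wk) + (1 - lam) * ((wk + t2)/wk)
            = (wk - (lam * t1 - (1 - lam) * t2))/wk := by ring
        rw [this, hkey, sub_zero, div_self hwk0.ne']
      · rw [hcao i h1 h2, hcbo i h1 h2]; ring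
    have hcomb : w = (lam:ℂ) • a + ((1 - lam : ℝ):ℂ) • b := by
      funext i
      simp only [Pi.add_apply, Pi.smul_apply, smul_eq_mul, haf, hbf]
      have : (lam:ℂ) * ((ca i : ℂ) * w i) + ((1 - lam : ℝ):ℂ) * ((cb i:ℂ) * w i)
          = ((lam * ca i + (1 - lam) * cb i : ℝ) : ℂ) * w i := by
        push_cast
        ring
      rw [this, hcoef i]
      simp
    -- hypotheses for a
    have ha_disj : ∀ i, a i ≠ 0 → X i = 0 := by
      intro i hi
      apply hdisj
      intro hwi
      apply hi
      rw [haf]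
      dsimp only
      rw [hwi, mul_zero]
    have hb_disj : ∀ i, b i ≠ 0 → X i = 0 := by
      intro i hi
      apply hdisj
      intro hwi
      apply hi
      rw [hbf]
      dsimp only
      rw [hwi, mul_zero]
    have ha_bnd : ∀ i, ‖a i‖ ≤ α := by
      intro i
      by_cases h1 : i = j
      · subst h1; rw [habs_aj]; linarith
      by_cases h2 : i = k
      · subst h2; rw [habs_ak]; linarith
      · rw [hao i h1 h2]; exact hbnd i
    have hb_bnd : ∀ i, ‖b i‖ ≤ α := by
      intro i
      by_cases h1 : i = j
      · subst h1; rw [habs_bj]; linarith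
      by_cases h2 : i = k
      · subst h2; rw [habs_bk]; linarith
      · rw [hbo i h1 h2]; exact hbnd i
    -- ℓ1 norms are preserved
    have hsum_gen : ∀ (v : Fin N → ℂ) (r : ℝ),
        (∀ i, ‖v i‖ = ‖w i‖
          + (if i = j then r else if i = k then -r else 0)) → S1 v = S1 w := by
      intro v r hv
      unfold S1
      rw [Finset.sum_congr rfl fun i _ => hv i, Finset.sum_add_distrib]
      have hsplit : ∀ i : Fin N, (if i = j then r else if i = k then -r else 0)
          = (if i = j then r else 0) + (if i = k then -r else 0) := by
        intro i
        by_cases h1 : i = j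
        · subst h1; simp [hjk]
        by_cases h2 : i = k
        · subst h2; simp [h1]
        · simp [h1, h2]
      rw [Finset.sum_congr rfl fun i _ => hsplit i, Finset.sum_add_distrib,
        Finset.sum_ite_eq' univ j fun _ => r, Finset.sum_ite_eq' univ k fun _ => -r]
      simp
    have ha_sum : S1 a = S1 w := by
      refine hsum_gen a t1 fun i => ?_
      by_cases h1 : i = j
      · subst h1; rw [habs_aj]; simp [← hwj]
      by_cases h2 : i = k
      · subst h2; rw [habs_ak]; simp [h1, ← hwk]; ring
      · rw [hao i h1 h2]; simp [h1, h2]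
    have hb_sum : S1 b = S1 w := by
      refine hsum_gen b (-t2) fun i => ?_
      by_cases h1 : i = j
      · subst h1; rw [habs_bj]; simp [← hwj]; ring
      by_cases h2 : i = k
      · subst h2; rw [habs_bk]; simp [h1, ← hwk]
      · rw [hbo i h1 h2]; simp [h1, h2]
    -- the fractional sets shrink
    have hsub_gen : ∀ (v : Fin N → ℂ), (∀ i, i ≠ j → i ≠ k → v i = w i) →
        (univ.filter fun i => v i ≠ 0 ∧ ‖v i‖ ≠ α)
          ⊆ (univ.filter fun i => w i ≠ 0 ∧ ‖w i‖ ≠ α) := by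
      intro v hv i hi
      have hi' := (Finset.mem_filter.mp hi).2
      by_cases h1 : i = j
      · subst h1; exact hjF
      by_cases h2 : i = k
      · subst h2; exact hkF
      · rw [hv i h1 h2] at hi'
        exact Finset.mem_filter.mpr ⟨Finset.mem_univ _, hi'⟩
    have ha_card : (univ.filter fun i => a i ≠ 0 ∧ ‖a i‖ ≠ α).card < n := by
      rw [← hn]
      apply Finset.card_lt_card
      rw [Finset.ssubset_iff_of_subset (hsub_gen a hao)]
      rcases le_total (α - wj) wk with hmin | hmin
      · refine ⟨j, hjF, fun hc => ?_⟩
        have : ‖a j‖ = α := by rw [habs_aj, ht1def, min_eq_left hmin]; ring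
        exact (Finset.mem_filter.mp hc).2.2 this
      · refine ⟨k, hkF, fun hc => ?_⟩
        have : ‖a k‖ = 0 := by rw [habs_ak, ht1def, min_eq_right hmin]; ring
        exact (Finset.mem_filter.mp hc).2.1 (norm_eq_zero.mp this)
    have hb_card : (univ.filter fun i => b i ≠ 0 ∧ ‖b i‖ ≠ α).card < n := by
      rw [← hn]
      apply Finset.card_lt_card
      rw [Finset.ssubset_iff_of_subset (hsub_gen b hbo)]
      rcases le_total wj (α - wk) with hmin | hmin
      · refine ⟨j, hjF, fun hc => ?_⟩
        have : ‖b j‖ = 0 := by rw [habs_bj, ht2def, min_eq_left hmin]; ring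
        exact (Finset.mem_filter.mp hc).2.1 (norm_eq_zero.mp this)
      · refine ⟨k, hkF, fun hc => ?_⟩
        have : ‖b k‖ = α := by rw [habs_bk, ht2def, min_eq_right hmin]; ring
        exact (Finset.mem_filter.mp hc).2.2 this
    have hIa := IH _ ha_card a rfl ha_disj ha_bnd (by rw [ha_sum]; exact hsum)
    have hIb := IH _ hb_card b rfl hb_disj hb_bnd (by rw [hb_sum]; exact hsum)
    have hmulvec : Ψ.mulVec w = (lam:ℂ) • Ψ.mulVec a + ((1 - lam : ℝ):ℂ) • Ψ.mulVec b := by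
      rw [hcomb, Matrix.mulVec_add, Matrix.mulVec_smul, Matrix.mulVec_smul]
    have hip : ipR (Ψ.mulVec X) (Ψ.mulVec w)
        = lam * ipR (Ψ.mulVec X) (Ψ.mulVec a) + (1 - lam) * ipR (Ψ.mulVec X) (Ψ.mulVec b) := by
      rw [hmulvec, ipR_smul_comb]
    rw [hip]
    have hc1 := mul_le_mul_of_nonneg_left hIa hlam0
    have hc2 := mul_le_mul_of_nonneg_left hIb (by linarith : (0:ℝ) ≤ 1 - lam)
    calc -(δ * (S2 X + ↑s * α ^ 2)) / 2
        = lam * (-(δ * (S2 X + ↑s * α ^ 2)) / 2)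
          + (1 - lam) * (-(δ * (S2 X + ↑s * α ^ 2)) / 2) := by ring
      _ ≤ lam * ipR (Ψ.mulVec X) (Ψ.mulVec a) + (1 - lam) * ipR (Ψ.mulVec X) (Ψ.mulVec b) :=
          add_le_add hc1 hc2
end RIPAux

set_option maxHeartbeats 2000000 in
/-- **Sparse recovery for RIP matrices, `ℓ₁` bound**: if `δ_{2s} ≤ δ < 3/(4+√6)`, every
minimizer of the noise-aware `ℓ₁`-minimization problem satisfies
`‖x - x#‖₁ ≤ D₁ σ_s(x)₁ + D₂ √s ε`. -/
theorem rip_l1_recovery_l1_bound (δ : ℝ) (hδ0 : 0 ≤ δ) (hδ : δ < 3 / (4 + Real.sqrt 6)) :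
    ∃ D₁ D₂ : ℝ, 0 < D₁ ∧ 0 < D₂ ∧
      ∀ (m N s : ℕ) (Ψ : Matrix (Fin m) (Fin N) ℂ), HasRIPBound (2 * s) δ Ψ →
        ∀ (x : Fin N → ℂ) (ε : ℝ) (η : Fin m → ℂ), 0 ≤ ε → lpNormC 2 η ≤ ε →
          ∀ xhat : Fin N → ℂ,
            IsL1MinOnC
              {z : Fin N → ℂ | lpNormC 2 (Ψ.mulVec z - (Ψ.mulVec x + η)) ≤ ε} xhat →
            lpNormC 1 (x - xhat) ≤ D₁ * bestApproxC s 1 x + D₂ * Real.sqrt s * ε := by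
  classical
  -- δ < 1/2
  have h62 : (2:ℝ) ≤ Real.sqrt 6 := by
    have h4 : Real.sqrt 4 = 2 := by
      rw [show (4:ℝ) = 2^2 by norm_num, Real.sqrt_sq (by norm_num : (0:ℝ) ≤ 2)]
    calc (2:ℝ) = Real.sqrt 4 := h4.symm
      _ ≤ Real.sqrt 6 := Real.sqrt_le_sqrt (by norm_num)
  have hhalf : δ < 1/2 := by
    have hpos : (0:ℝ) < 4 + Real.sqrt 6 := by positivity
    rw [lt_div_iff₀ hpos] at hδ
    nlinarith
  set A := 1 - 2*δ with hAdef
  have hA : 0 < A := by rw [hAdef]; linarith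
  set D₁ := 4*δ/A + 2*Real.sqrt (2*δ/A) + 2 with hD1
  set D₂ := 4*Real.sqrt (1+δ)/A with hD2
  have hD1two : 2 ≤ D₁ := by
    have h1 : 0 ≤ 4*δ/A := by positivity
    have h2 : 0 ≤ Real.sqrt (2*δ/A) := Real.sqrt_nonneg _
    rw [hD1]; linarith
  have hD1pos : 0 < D₁ := by linarith
  have hD2pos : 0 < D₂ := by
    rw [hD2]
    have : 0 < Real.sqrt (1+δ) := Real.sqrt_pos.mpr (by linarith)
    positivity
  refine ⟨D₁, D₂, hD1pos, hD2pos, ?_⟩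
  intro m N s Ψ hrip x ε η hε hη xhat hmin
  obtain ⟨hfeas_hat, hminle⟩ := hmin
  have hxfeas : lpNormC 2 (Ψ.mulVec x - (Ψ.mulVec x + η)) ≤ ε := by
    have heq : Ψ.mulVec x - (Ψ.mulVec x + η) = -η := by
      funext i; simp
    rw [heq, RIPAux.lpNormC_two]
    have heq2 : RIPAux.S2 (-η) = RIPAux.S2 η := by
      unfold RIPAux.S2; exact Finset.sum_congr rfl fun i _ => by simp
    rw [heq2, ← RIPAux.lpNormC_two]
    exact hη
  have hhat1 : lpNormC 1 xhat ≤ lpNormC 1 x := hminle x hxfeas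
  set h := x - xhat with hh
  -- tube constraint
  have hΨh : Real.sqrt (RIPAux.S2 (Ψ.mulVec h)) ≤ 2*ε := by
    have hsplit : Ψ.mulVec h = (-η) + -(Ψ.mulVec xhat - (Ψ.mulVec x + η)) := by
      rw [hh, Matrix.mulVec_sub]
      funext i
      simp only [Pi.sub_apply, Pi.add_apply, Pi.neg_apply]
      ring
    rw [hsplit]
    have tri := RIPAux.sqrtS2_add_le (-η) (-(Ψ.mulVec xhat - (Ψ.mulVec x + η)))
    have e1 : RIPAux.S2 (-η) = RIPAux.S2 η := by
      unfold RIPAux.S2; exact Finset.sum_congr rfl fun i _ => by simp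
    have e2 : RIPAux.S2 (-(Ψ.mulVec xhat - (Ψ.mulVec x + η)))
        = RIPAux.S2 (Ψ.mulVec xhat - (Ψ.mulVec x + η)) := by
      unfold RIPAux.S2
      exact Finset.sum_congr rfl fun i _ => by
        rw [Pi.neg_apply, norm_neg]
    rw [e1, e2] at tri
    have hfe : Real.sqrt (RIPAux.S2 (Ψ.mulVec xhat - (Ψ.mulVec x + η))) ≤ ε := by
      rw [← RIPAux.lpNormC_two]; exact hfeas_hat
    have hηe : Real.sqrt (RIPAux.S2 η) ≤ ε := by
      rw [← RIPAux.lpNormC_two]; exact hη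
    linarith
  rcases Nat.eq_zero_or_pos s with hs0 | hs
  · -- s = 0 : trivial case
    subst hs0
    have hba : bestApproxC 0 1 x = lpNormC 1 x := by
      unfold bestApproxC
      have hset : { t | ∃ y : Fin N → ℂ, IsSparseC 0 y ∧ t = lpNormC 1 (x - y) }
          = {lpNormC 1 x} := by
        ext t
        simp only [Set.mem_setOf_eq, Set.mem_singleton_iff]
        constructor
        · rintro ⟨y, ⟨T, hT, hy⟩, rfl⟩
          have hTe : T = ∅ := Finset.card_eq_zero.mp (Nat.le_zero.mp hT)
          have hy0 : y = 0 := funext fun j => hy j (hTe ▸ Finset.notMem_empty j)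
          rw [hy0, sub_zero]
        · rintro rfl
          exact ⟨0, ⟨∅, le_refl _, fun _ _ => rfl⟩, by rw [sub_zero]⟩
      rw [hset, csInf_singleton]
    rw [hba]
    have htri : lpNormC 1 (x - xhat) ≤ lpNormC 1 x + lpNormC 1 xhat := by
      rw [RIPAux.lpNormC_one, RIPAux.lpNormC_one, RIPAux.lpNormC_one]
      unfold RIPAux.S1
      rw [← Finset.sum_add_distrib]
      refine Finset.sum_le_sum fun j _ => ?_
      have := norm_add_le (x j) (-xhat j)
      simpa [sub_eq_add_neg] using this
    have hx1 : 0 ≤ lpNormC 1 x := by rw [RIPAux.lpNormC_one]; exact RIPAux.S1_nonneg x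
    have : (Real.sqrt ((0:ℕ):ℝ)) = 0 := by simp
    rw [this, mul_zero, zero_mul, add_zero]
    nlinarith
  · -- main case s ≥ 1
    set e0 := bestApproxC s 1 x with he0def
    have he0 : 0 ≤ e0 := by
      rw [he0def]
      unfold bestApproxC
      refine Real.sInf_nonneg fun t ht => ?_
      obtain ⟨y, _, rfl⟩ := ht
      rw [RIPAux.lpNormC_one]; exact RIPAux.S1_nonneg _
    have main : ∀ γ : ℝ, 0 < γ →
        lpNormC 1 (x - xhat) ≤ D₁ * (e0 + γ) + D₂ * Real.sqrt s * ε := by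
      intro γ hγ
      set E := e0 + γ with hEdef
      have hE : 0 < E := by rw [hEdef]; linarith
      -- near-best s-term approximation
      have hSne : { t | ∃ y : Fin N → ℂ, IsSparseC s y ∧ t = lpNormC 1 (x - y) }.Nonempty :=
        ⟨lpNormC 1 (x - 0), 0, ⟨∅, by simp, fun _ _ => rfl⟩, rfl⟩
      obtain ⟨tv, ⟨y, ⟨T, hTcard, hyoff⟩, htv⟩, htlt⟩ := Real.lt_sInf_add_pos hSne hγ
      have hTtail : ∑ j ∈ Tᶜ, ‖x j‖ ≤ E := by
        have heq : ∑ j ∈ Tᶜ, ‖x j‖ = ∑ j ∈ Tᶜ, ‖(x-y) j‖ :=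
          Finset.sum_congr rfl fun j hj => by
            rw [Pi.sub_apply, hyoff j (Finset.mem_compl.mp hj), sub_zero]
        have hle : ∑ j ∈ Tᶜ, ‖(x-y) j‖ ≤ RIPAux.S1 (x - y) :=
          Finset.sum_le_sum_of_subset_of_nonneg (Finset.subset_univ _)
            fun j _ _ => norm_nonneg _
        have := RIPAux.lpNormC_one (x - y)
        rw [heq]
        calc ∑ j ∈ Tᶜ, ‖(x-y) j‖ ≤ RIPAux.S1 (x - y) := hle
          _ = tv := by rw [htv, RIPAux.lpNormC_one]
          _ ≤ E := by rw [hEdef, he0def]; exact le_of_lt htlt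
      obtain ⟨T0, hT0card, htop⟩ := RIPAux2.exists_top h s
      set X := RIPAux.mask T0 h with hXdef
      set w := RIPAux.mask T0ᶜ h with hwdef
      have hXw : X + w = h := RIPAux.mask_add_compl T0 h
      -- cone constraint
      have hxh : xhat = x - h := by rw [hh]; funext j; simp
      have habs1 : ∀ j, ‖x j‖ - ‖h j‖ ≤ ‖x j - h j‖ := by
        intro j
        have := norm_add_le (x j - h j) (h j)
        rw [sub_add_cancel] at this
        linarith
      have habs2 : ∀ j, ‖h j‖ - ‖x j‖ ≤ ‖x j - h j‖ := by
        intro j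
        have := norm_add_le (-(x j - h j)) (x j)
        rw [show -(x j - h j) + x j = h j from by ring, norm_neg] at this
        linarith
      have hxhat_split : RIPAux.S1 xhat
          = ∑ j ∈ T, ‖x j - h j‖ + ∑ j ∈ Tᶜ, ‖x j - h j‖ := by
        rw [hxh]
        unfold RIPAux.S1
        rw [← Finset.sum_add_sum_compl T]
        simp only [Pi.sub_apply]
      have hx_split : RIPAux.S1 x
          = ∑ j ∈ T, ‖x j‖ + ∑ j ∈ Tᶜ, ‖x j‖ := by
        unfold RIPAux.S1
        rw [← Finset.sum_add_sum_compl T]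
      have hcone0 : ∑ j ∈ Tᶜ, ‖h j‖ ≤ ∑ j ∈ T, ‖h j‖ + 2*E := by
        have hb1 : ∑ j ∈ T, (‖x j‖ - ‖h j‖)
            ≤ ∑ j ∈ T, ‖x j - h j‖ := Finset.sum_le_sum fun j _ => habs1 j
        have hb2 : ∑ j ∈ Tᶜ, (‖h j‖ - ‖x j‖)
            ≤ ∑ j ∈ Tᶜ, ‖x j - h j‖ := Finset.sum_le_sum fun j _ => habs2 j
        rw [Finset.sum_sub_distrib] at hb1 hb2
        have hS1hat : RIPAux.S1 xhat ≤ RIPAux.S1 x := by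
          rw [← RIPAux.lpNormC_one, ← RIPAux.lpNormC_one]; exact hhat1
        rw [hxhat_split] at hS1hat
        rw [hx_split] at hS1hat
        linarith [hTtail]
      have hcard_le : T.card ≤ T0.card := by
        rw [hT0card]
        have h1 : T.card ≤ N := by
          have := Finset.card_le_univ T
          simpa using this
        omega
      have hTT0 : ∑ j ∈ T, ‖h j‖ ≤ ∑ j ∈ T0, ‖h j‖ :=
        RIPAux2.top_sum_ge h T0 htop T hcard_le
      have hS1X : RIPAux.S1 X = ∑ j ∈ T0, ‖h j‖ := RIPAux.S1_mask T0 h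
      have hS1w : RIPAux.S1 w = ∑ j ∈ T0ᶜ, ‖h j‖ := RIPAux.S1_mask T0ᶜ h
      have hsum_split : RIPAux.S1 h
          = ∑ j ∈ T0, ‖h j‖ + ∑ j ∈ T0ᶜ, ‖h j‖ := by
        unfold RIPAux.S1
        rw [← Finset.sum_add_sum_compl T0]
      have hsum_splitT : RIPAux.S1 h
          = ∑ j ∈ T, ‖h j‖ + ∑ j ∈ Tᶜ, ‖h j‖ := by
        unfold RIPAux.S1
        rw [← Finset.sum_add_sum_compl T]
      have hcone : RIPAux.S1 w ≤ RIPAux.S1 X + 2*E := by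
        rw [hS1w, hS1X]
        have h1 : ∑ j ∈ T0ᶜ, ‖h j‖
            = RIPAux.S1 h - ∑ j ∈ T0, ‖h j‖ := by rw [hsum_split]; ring
        have h2 : ∑ j ∈ Tᶜ, ‖h j‖
            = RIPAux.S1 h - ∑ j ∈ T, ‖h j‖ := by rw [hsum_splitT]; ring
        linarith
      -- set up α
      set α := (RIPAux.S1 X + 2*E)/s with hαdef
      have hS1X0 : 0 ≤ RIPAux.S1 X := RIPAux.S1_nonneg X
      have hspos : (0:ℝ) < s := by exact_mod_cast hs
      have hα : 0 < α := by rw [hαdef]; positivity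
      have hsα : (s:ℝ) * α = RIPAux.S1 X + 2*E := by
        rw [hαdef]; field_simp
      have hw_sum : RIPAux.S1 w ≤ s * α := by rw [hsα]; exact hcone
      have hw_bnd : ∀ i, ‖w i‖ ≤ α := by
        intro i
        by_cases hi : i ∈ T0
        · have : w i = 0 := by
            rw [hwdef]
            unfold RIPAux.mask
            simp [hi]
          rw [this]
          simpa using hα.le
        · have hwi : w i = h i := by
            rw [hwdef]
            unfold RIPAux.mask
            simp [hi]
          have hT0u : T0 ≠ Finset.univ := fun hc => hi (hc ▸ Finset.mem_univ i)
          have hcardlt : T0.card < N := by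
            have := Finset.card_lt_card (Finset.ssubset_univ_iff.mpr hT0u)
            simpa using this
          have hT0s : T0.card = s := by omega
          have hlee : T0.card • ‖h i‖ ≤ ∑ j ∈ T0, ‖h j‖ :=
            Finset.card_nsmul_le_sum T0 _ _ fun j hj => htop j hj i hi
          rw [nsmul_eq_mul, hT0s] at hlee
          rw [hwi]
          rw [← hS1X] at hlee
          have : (s:ℝ) * ‖h i‖ ≤ s * α := by
            rw [hsα]; linarith
          exact le_of_mul_le_mul_left this hspos
      have hdisjXw : ∀ i, w i ≠ 0 → X i = 0 := by
        intro i hwi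
        have hi : i ∉ T0 := by
          intro hc
          apply hwi
          rw [hwdef]; unfold RIPAux.mask; simp [hc]
        rw [hXdef]; unfold RIPAux.mask; simp [hi]
      have hT0s_le : T0.card ≤ s := by rw [hT0card]; omega
      have hXsp : IsSparseC s X :=
        ⟨T0, hT0s_le, fun j hj => by rw [hXdef]; unfold RIPAux.mask; simp [hj]⟩
      have hX2sp : IsSparseC (2*s) X :=
        ⟨T0, by omega, fun j hj => by rw [hXdef]; unfold RIPAux.mask; simp [hj]⟩
      -- key inequality
      have hkey := RIPAux.key_lower Ψ s δ α hδ0 hα hrip X hXsp _ w rfl hdisjXw hw_bnd hw_sum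
      set t := Real.sqrt (RIPAux.S2 X) with htdef
      have ht0 : 0 ≤ t := Real.sqrt_nonneg _
      have ht2 : t^2 = RIPAux.S2 X := Real.sq_sqrt (RIPAux.S2_nonneg X)
      have c1 : (1-δ) * RIPAux.S2 X ≤ RIPAux.S2 (Ψ.mulVec X) := by
        have := (hrip X hX2sp).1
        rwa [RIPAux.lpNormC_two_sq, RIPAux.lpNormC_two_sq] at this
      have c1b : RIPAux.S2 (Ψ.mulVec X) ≤ (1+δ) * RIPAux.S2 X := by
        have := (hrip X hX2sp).2
        rwa [RIPAux.lpNormC_two_sq, RIPAux.lpNormC_two_sq] at this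
      have c2 : RIPAux.S2 (Ψ.mulVec X)
          = RIPAux.ipR (Ψ.mulVec X) (Ψ.mulVec h) - RIPAux.ipR (Ψ.mulVec X) (Ψ.mulVec w) := by
        have hm : Ψ.mulVec h = Ψ.mulVec X + Ψ.mulVec w := by
          rw [← hXw, Matrix.mulVec_add]
        rw [hm, RIPAux.ipR_add_right, RIPAux.ipR_self]
        ring
      have c3 : RIPAux.ipR (Ψ.mulVec X) (Ψ.mulVec h) ≤ Real.sqrt (1+δ) * t * (2*ε) := by
        calc RIPAux.ipR (Ψ.mulVec X) (Ψ.mulVec h)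
            ≤ Real.sqrt (RIPAux.S2 (Ψ.mulVec X)) * Real.sqrt (RIPAux.S2 (Ψ.mulVec h)) :=
              RIPAux.ipR_le _ _
          _ ≤ Real.sqrt ((1+δ) * RIPAux.S2 X) * (2*ε) := by
              refine mul_le_mul (Real.sqrt_le_sqrt c1b) hΨh (Real.sqrt_nonneg _)
                (Real.sqrt_nonneg _)
          _ = Real.sqrt (1+δ) * t * (2*ε) := by
              rw [Real.sqrt_mul (by linarith : (0:ℝ) ≤ 1+δ), htdef]
      -- bound s α² by (t + 2ρ)²
      set ρ := E / Real.sqrt s with hρdef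
      have hsq : 0 < Real.sqrt s := Real.sqrt_pos.mpr hspos
      have hρ0 : 0 < ρ := by rw [hρdef]; positivity
      have hsqs : (Real.sqrt s)^2 = (s:ℝ) := Real.sq_sqrt hspos.le
      have hS1Xt : RIPAux.S1 X ≤ Real.sqrt s * t := by
        have hcs : (RIPAux.S1 X)^2 ≤ (T0.card : ℝ) * RIPAux.S2 X := by
          have hS2X : RIPAux.S2 X = ∑ j ∈ T0, ‖h j‖ ^ 2 := RIPAux.S2_mask T0 h
          rw [hS1X, hS2X]
          have := Finset.sum_mul_sq_le_sq_mul_sq T0 (fun _ => (1:ℝ))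
            (fun j => ‖h j‖)
          simpa using this
        have hcs2 : (RIPAux.S1 X)^2 ≤ (s:ℝ) * t^2 := by
          rw [ht2]
          calc (RIPAux.S1 X)^2 ≤ (T0.card : ℝ) * RIPAux.S2 X := hcs
            _ ≤ (s:ℝ) * RIPAux.S2 X := by
                apply mul_le_mul_of_nonneg_right _ (RIPAux.S2_nonneg X)
                exact_mod_cast hT0s_le
        calc RIPAux.S1 X = Real.sqrt ((RIPAux.S1 X)^2) := (Real.sqrt_sq hS1X0).symm
          _ ≤ Real.sqrt ((s:ℝ) * t^2) := Real.sqrt_le_sqrt hcs2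
          _ = Real.sqrt s * t := by rw [Real.sqrt_mul hspos.le, Real.sqrt_sq ht0]
      have c5 : (s:ℝ) * α^2 ≤ (t + 2*ρ)^2 := by
        have hlhs : (s:ℝ) * α^2 = ((RIPAux.S1 X + 2*E)/Real.sqrt s)^2 := by
          have h1 : ((RIPAux.S1 X + 2*E)/Real.sqrt s)^2
              = (RIPAux.S1 X + 2*E)^2 / (Real.sqrt s)^2 := div_pow _ _ _
          rw [h1, hsqs, hαdef]
          field_simp
        have hder : (RIPAux.S1 X + 2*E)/Real.sqrt s ≤ t + 2*ρ := by
          rw [add_div, hρdef]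
          have h1 : RIPAux.S1 X / Real.sqrt s ≤ t := by
            rw [div_le_iff₀ hsq]
            calc RIPAux.S1 X ≤ Real.sqrt s * t := hS1Xt
              _ = t * Real.sqrt s := by ring
          have h2 : 2*E/Real.sqrt s = 2*(E/Real.sqrt s) := by ring
          rw [h2]
          linarith
        rw [hlhs]
        have hnn : 0 ≤ (RIPAux.S1 X + 2*E)/Real.sqrt s := by positivity
        exact pow_le_pow_left₀ hnn hder 2
      -- combine
      have e1 : (1-δ)*t^2 ≤ Real.sqrt (1+δ)*t*(2*ε) + δ*(t^2 + s*α^2)/2 := by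
        rw [ht2]
        have := hkey
        rw [c2] at c1
        linarith
      have e2 : δ*(t^2 + s*α^2)/2 ≤ δ*(t^2 + (t+2*ρ)^2)/2 := by
        have := mul_le_mul_of_nonneg_left c5 hδ0
        linarith
      have hexpand : δ*(t^2 + (t+2*ρ)^2)/2 = δ*t^2/2 + δ*t^2/2 + 2*(δ*(ρ*t)) + 2*(δ*ρ^2) := by
        ring
      have hexp2 : Real.sqrt (1+δ)*t*(2*ε) = 2*(Real.sqrt (1+δ)*ε*t) := by ring
      have hquad : A * t^2 ≤ (2*Real.sqrt (1+δ)*ε + 2*δ*ρ)*t + 2*δ*ρ^2 := by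
        rw [hAdef]
        have hcomb : (1-δ)*t^2 ≤ Real.sqrt (1+δ)*t*(2*ε) + δ*(t^2 + (t+2*ρ)^2)/2 :=
          le_trans e1 (by linarith)
        rw [hexpand, hexp2] at hcomb
        have hgoal_eq : (2*Real.sqrt (1+δ)*ε + 2*δ*ρ)*t + 2*δ*ρ^2
            = 2*(Real.sqrt (1+δ)*ε*t) + 2*(δ*(ρ*t)) + 2*(δ*ρ^2) := by ring
        rw [hgoal_eq]
        linarith
      have hB0 : 0 ≤ 2*Real.sqrt (1+δ)*ε + 2*δ*ρ := by positivity
      have hC0 : (0:ℝ) ≤ 2*δ*ρ^2 := by positivity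
      have htB := RIPAux2.quad_bound A (2*Real.sqrt (1+δ)*ε + 2*δ*ρ) (2*δ*ρ^2) t hA hB0 hC0
        ht0 hquad
      have hCA : Real.sqrt ((2*δ*ρ^2)/A) = Real.sqrt (2*δ/A) * ρ := by
        rw [show (2*δ*ρ^2)/A = (2*δ/A)*ρ^2 from by ring,
          Real.sqrt_mul (by positivity) _, Real.sqrt_sq hρ0.le]
      rw [hCA] at htB
      have hsρ : Real.sqrt s * ρ = E := by
        rw [hρdef, mul_comm, div_mul_cancel₀ _ hsq.ne']
      -- final assembly
      have hst : Real.sqrt s * t ≤ Real.sqrt s * ((2*Real.sqrt (1+δ)*ε + 2*δ*ρ)/A)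
          + Real.sqrt (2*δ/A) * E := by
        have h4 := mul_le_mul_of_nonneg_left htB hsq.le
        have h5 : Real.sqrt s * ((2*Real.sqrt (1+δ)*ε + 2*δ*ρ)/A + Real.sqrt (2*δ/A) * ρ)
            = Real.sqrt s * ((2*Real.sqrt (1+δ)*ε + 2*δ*ρ)/A)
              + Real.sqrt (2*δ/A) * (Real.sqrt s * ρ) := by ring
        rw [h5, hsρ] at h4
        exact h4
      have hsB : Real.sqrt s * ((2*Real.sqrt (1+δ)*ε + 2*δ*ρ)/A)
          = (2*Real.sqrt (1+δ)*ε*Real.sqrt s + 2*δ*E)/A := by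
        have h6 : Real.sqrt s * ((2*Real.sqrt (1+δ)*ε + 2*δ*ρ)/A)
            = (Real.sqrt s*(2*Real.sqrt (1+δ)*ε) + 2*δ*(Real.sqrt s*ρ))/A := by ring
        rw [h6, hsρ]
        ring
      have hfinal_eq : 2*((2*Real.sqrt (1+δ)*ε*Real.sqrt s + 2*δ*E)/A
            + Real.sqrt (2*δ/A)*E) + 2*E
          = D₁*E + D₂*Real.sqrt s*ε := by
        rw [hD1, hD2]
        ring
      have hgoal : RIPAux.S1 h ≤ D₁*E + D₂*Real.sqrt s*ε := by
        have hs1 : RIPAux.S1 h = RIPAux.S1 X + RIPAux.S1 w := RIPAux.S1_split T0 h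
        have : RIPAux.S1 h ≤ 2*(Real.sqrt s * t) + 2*E := by
          rw [hs1]
          linarith [hS1Xt, hcone]
        calc RIPAux.S1 h ≤ 2*(Real.sqrt s * t) + 2*E := this
          _ ≤ 2*((2*Real.sqrt (1+δ)*ε*Real.sqrt s + 2*δ*E)/A
              + Real.sqrt (2*δ/A)*E) + 2*E := by
                rw [← hsB]
                linarith [hst]
          _ = D₁*E + D₂*Real.sqrt s*ε := hfinal_eq
      rw [RIPAux.lpNormC_one, ← hh]
      calc RIPAux.S1 h ≤ D₁*E + D₂*Real.sqrt s*ε := hgoal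
        _ = D₁ * (e0 + γ) + D₂ * Real.sqrt s * ε := by rw [hEdef]
    refine le_of_forall_pos_le_add fun γ' hγ' => ?_
    have hmain := main (γ'/D₁) (by positivity)
    calc lpNormC 1 (x - xhat) ≤ D₁ * (e0 + γ'/D₁) + D₂*Real.sqrt s*ε := hmain
      _ = D₁*e0 + D₂*Real.sqrt s*ε + γ' := by field_simp; ring
end
end

section
/- Let N ∈ ℕ, s ≥ 1, x ∈ ℝ^N, and let x̂ ∈ ℝ^N be 2s-sparse. Then ‖x − x̂‖₁ ≤ σ_s(x)₁ + √(3s)·‖x − x̂‖₂. Consequently, for any constants C₁, C₂ > 0 and ε ≥ 0, if ‖x − x̂‖₂ ≤ C₁·σ_s(x)₁/√s + C₂·ε, then ‖x − x̂‖₁ ≤ (1 + √3·C₁)·σ_s(x)₁ + √3·C₂·√s·ε. -/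
open MeasureTheory Finset Real

noncomputable section

/-- The `ℓ_p` norm of a vector `x ∈ ℝ^N`. -/
def lpNorm {N : ℕ} (p : ℝ) (x : Fin N → ℝ) : ℝ :=
  (∑ j, |x j| ^ p) ^ (1 / p)

/-- A vector is `s`-sparse if it has at most `s` nonzero entries. -/
def IsSparse {N : ℕ} (s : ℕ) (y : Fin N → ℝ) : Prop :=
  ∃ T : Finset (Fin N), T.card ≤ s ∧ ∀ j ∉ T, y j = 0

/-- Error of best `s`-term approximation in the `ℓ_p` norm. -/
def bestApprox {N : ℕ} (s : ℕ) (p : ℝ) (x : Fin N → ℝ) : ℝ :=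
  sInf { t | ∃ y : Fin N → ℝ, IsSparse s y ∧ t = lpNorm p (x - y) }

lemma lpNorm_one_eq {N : ℕ} (v : Fin N → ℝ) : lpNorm 1 v = ∑ j, |v j| := by
  simp [_root_.lpNorm]

lemma lpNorm_two_eq {N : ℕ} (v : Fin N → ℝ) : lpNorm 2 v = Real.sqrt (∑ j, (v j) ^ 2) := by
  rw [_root_.lpNorm, Real.sqrt_eq_rpow]
  congr 1
  refine Finset.sum_congr rfl fun j _ => ?_
  rw [show (2 : ℝ) = ((2 : ℕ) : ℝ) by norm_num, Real.rpow_natCast, sq_abs]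

lemma lpNorm_one_nonneg {N : ℕ} (v : Fin N → ℝ) : 0 ≤ lpNorm 1 v := by
  rw [lpNorm_one_eq]; positivity

/-- If `x̂` is `2s`-sparse then `‖x − x̂‖₁ ≤ σ_s(x)₁ + √(3s)·‖x − x̂‖₂`; consequently an
`ℓ₂` error bound of the form `C₁σ_s(x)₁/√s + C₂ε` yields the corresponding `ℓ₁` bound. -/
theorem l1_error_from_l2_error (N s : ℕ) (hs : 1 ≤ s) (x xhat : Fin N → ℝ)
    (hxhat : IsSparse (2 * s) xhat) :
    lpNorm 1 (x - xhat) ≤ bestApprox s 1 x + Real.sqrt (3 * s) * lpNorm 2 (x - xhat) ∧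
    ∀ C₁ C₂ ε : ℝ, 0 < C₁ → 0 < C₂ → 0 ≤ ε →
      lpNorm 2 (x - xhat) ≤ C₁ * bestApprox s 1 x / Real.sqrt s + C₂ * ε →
      lpNorm 1 (x - xhat) ≤
        (1 + Real.sqrt 3 * C₁) * bestApprox s 1 x + Real.sqrt 3 * C₂ * Real.sqrt s * ε := by
  obtain ⟨U, hUc, hUz⟩ := hxhat
  have key : ∀ y : Fin N → ℝ, IsSparse s y →
      lpNorm 1 (x - xhat) ≤ lpNorm 1 (x - y) + Real.sqrt (3 * s) * lpNorm 2 (x - xhat) := by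
    rintro y ⟨S, hSc, hSz⟩
    set T := S ∪ U with hT
    have hsplit : lpNorm 1 (x - xhat) =
        (∑ j ∈ Tᶜ, |x j - xhat j|) + ∑ j ∈ T, |x j - xhat j| := by
      simp only [lpNorm_one_eq, Pi.sub_apply]
      rw [← Finset.sum_compl_add_sum T fun j => |x j - xhat j|]
    have tail : ∑ j ∈ Tᶜ, |x j - xhat j| ≤ lpNorm 1 (x - y) := by
      rw [lpNorm_one_eq]
      have h1 : ∑ j ∈ Tᶜ, |x j - xhat j| = ∑ j ∈ Tᶜ, |x j - y j| := by
        refine Finset.sum_congr rfl fun j hj => ?_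
        rw [Finset.mem_compl, hT, Finset.mem_union] at hj
        push_neg at hj
        rw [hSz j hj.1, hUz j hj.2]
      rw [h1]
      simp only [Pi.sub_apply]
      exact Finset.sum_le_sum_of_subset_of_nonneg (Finset.subset_univ _)
        fun j _ _ => abs_nonneg _
    have head : ∑ j ∈ T, |x j - xhat j| ≤ Real.sqrt (3 * s) * lpNorm 2 (x - xhat) := by
      rw [lpNorm_two_eq]
      have cs := Real.sum_mul_le_sqrt_mul_sqrt T (fun _ => (1:ℝ)) (fun j => |x j - xhat j|)
      simp only [one_mul, one_pow, sq_abs, Finset.sum_const, nsmul_eq_mul, mul_one] at cs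
      refine cs.trans ?_
      have h2 : (T.card : ℝ) ≤ 3 * s := by
        have h4 := (Finset.card_union_le S U).trans (Nat.add_le_add hSc hUc)
        have h3 : T.card ≤ 3 * s := by rw [hT]; omega
        exact_mod_cast h3
      refine mul_le_mul (Real.sqrt_le_sqrt h2) (Real.sqrt_le_sqrt ?_)
        (Real.sqrt_nonneg _) (Real.sqrt_nonneg _)
      simp only [Pi.sub_apply]
      exact Finset.sum_le_sum_of_subset_of_nonneg (Finset.subset_univ _)
        fun j _ _ => sq_nonneg _
    linarith
  have hset_ne : { t | ∃ y : Fin N → ℝ, IsSparse s y ∧ t = lpNorm 1 (x - y) }.Nonempty :=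
    ⟨lpNorm 1 (x - 0), 0, ⟨∅, by simp, fun j _ => rfl⟩, rfl⟩
  have h1 : lpNorm 1 (x - xhat) ≤ bestApprox s 1 x + Real.sqrt (3 * s) * lpNorm 2 (x - xhat) := by
    rw [bestApprox]
    have hle : lpNorm 1 (x - xhat) - Real.sqrt (3 * s) * lpNorm 2 (x - xhat) ≤
        sInf { t | ∃ y : Fin N → ℝ, IsSparse s y ∧ t = lpNorm 1 (x - y) } := by
      refine le_csInf hset_ne ?_
      rintro t ⟨y, hy, rfl⟩
      linarith [key y hy]
    linarith
  refine ⟨h1, ?_⟩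
  intro C₁ C₂ ε hC₁ hC₂ hε h2
  have hss : (0:ℝ) < Real.sqrt s := Real.sqrt_pos.mpr (by exact_mod_cast hs)
  have h3s : Real.sqrt (3 * s) = Real.sqrt 3 * Real.sqrt s := by
    rw [← Real.sqrt_mul (by norm_num)]
  have h2' : Real.sqrt (3 * s) * lpNorm 2 (x - xhat) ≤
      Real.sqrt (3 * s) * (C₁ * bestApprox s 1 x / Real.sqrt s + C₂ * ε) := by
    apply mul_le_mul_of_nonneg_left h2 (Real.sqrt_nonneg _)
  have heq : Real.sqrt (3 * s) * (C₁ * bestApprox s 1 x / Real.sqrt s + C₂ * ε) =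
      Real.sqrt 3 * C₁ * bestApprox s 1 x + Real.sqrt 3 * C₂ * Real.sqrt s * ε := by
    rw [h3s]; field_simp
  have := h1.trans (by linarith : bestApprox s 1 x + Real.sqrt (3 * s) * lpNorm 2 (x - xhat) ≤
    bestApprox s 1 x + (Real.sqrt 3 * C₁ * bestApprox s 1 x + Real.sqrt 3 * C₂ * Real.sqrt s * ε))
  linarith
end
end

section
/- (Stechkin estimate) Let 0 < q < p < ∞, let N ∈ ℕ, s ≥ 1, and let x ∈ ℝ^N. Then the best s-term approximation error satisfies σ_s(x)_p ≤ s^{1/p − 1/q}·‖x‖_q, where ‖x‖_q = (Σ_j |x_j|^q)^{1/q}. -/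
open MeasureTheory Finset Real

noncomputable section

lemma lpNorm_nonneg {N : ℕ} (p : ℝ) (x : Fin N → ℝ) : 0 ≤ lpNorm p x :=
  Real.rpow_nonneg (Finset.sum_nonneg fun j _ => Real.rpow_nonneg (abs_nonneg _) _) _

lemma bestApprox_le {N s : ℕ} {p : ℝ} {x y : Fin N → ℝ} (hy : IsSparse s y) :
    bestApprox s p x ≤ lpNorm p (x - y) := by
  apply csInf_le
  · exact ⟨0, fun t ⟨y', _, ht⟩ => ht ▸ lpNorm_nonneg _ _⟩
  · exact ⟨y, hy, rfl⟩

lemma exists_top_set {N : ℕ} (f : Fin N → ℝ) (s : ℕ) (hsN : s ≤ N) :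
    ∃ T : Finset (Fin N), T.card = s ∧ ∀ j ∉ T, ∀ i ∈ T, f j ≤ f i := by
  obtain ⟨T0, _, hT0⟩ := Finset.exists_subset_card_eq (s := (univ : Finset (Fin N))) (n := s) (by simpa using hsN)
  obtain ⟨T, hT, hmax⟩ := Finset.exists_max_image
    (((univ : Finset (Finset (Fin N)))).filter fun T => T.card = s)
    (fun T => ∑ i ∈ T, f i) ⟨T0, by simp [hT0]⟩
  simp only [mem_filter, mem_univ, true_and] at hT
  refine ⟨T, hT, fun j hj i hi => ?_⟩
  have hji : j ∉ T.erase i := fun h => hj (Finset.mem_of_mem_erase h)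
  have hT1 : 1 ≤ T.card := Finset.card_pos.mpr ⟨i, hi⟩
  have hcard : (insert j (T.erase i)).card = s := by
    rw [Finset.card_insert_of_notMem hji, Finset.card_erase_of_mem hi]
    omega
  have h1 := hmax (insert j (T.erase i)) (by simp [hcard])
  rw [Finset.sum_insert hji] at h1
  have h2 : ∑ i' ∈ T, f i' = f i + ∑ i' ∈ T.erase i, f i' := (Finset.add_sum_erase T f hi).symm
  linarith

/-- **Stechkin estimate**: for `0 < q < p < ∞` and `s ≥ 1`,
`σ_s(x)_p ≤ s^{1/p - 1/q} ‖x‖_q`. -/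
theorem stechkin_estimate (p q : ℝ) (hq : 0 < q) (hqp : q < p)
    (N s : ℕ) (hs : 1 ≤ s) (x : Fin N → ℝ) :
    bestApprox s p x ≤ (s : ℝ) ^ (1 / p - 1 / q) * lpNorm q x := by
  have hp : 0 < p := hq.trans hqp
  have hq0 : q ≠ 0 := hq.ne'
  have hp0 : p ≠ 0 := hp.ne'
  set B := ∑ j, |x j| ^ q with hBdef
  have hBnn : 0 ≤ B := Finset.sum_nonneg fun j _ => Real.rpow_nonneg (abs_nonneg _) _
  have hRHS : 0 ≤ (s : ℝ) ^ (1 / p - 1 / q) * lpNorm q x :=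
    mul_nonneg (Real.rpow_nonneg (Nat.cast_nonneg _) _) (lpNorm_nonneg _ _)
  by_cases hNs : N ≤ s
  · have hx : IsSparse s x := ⟨univ, by simpa using hNs, by simp⟩
    refine (bestApprox_le hx).trans ?_
    have h0 : lpNorm p (x - x) = 0 := by
      simp [_root_.lpNorm, Real.zero_rpow hp0, Real.zero_rpow (one_div_ne_zero hp0), Real.zero_rpow (inv_ne_zero hp0)]
    rw [h0]; exact hRHS
  push_neg at hNs
  rcases eq_or_lt_of_le hBnn with hB0 | hBpos
  · -- x = 0
    have hx0 : ∀ j, x j = 0 := by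
      intro j
      have h1 := (Finset.sum_eq_zero_iff_of_nonneg
        (fun j (_ : j ∈ univ) => Real.rpow_nonneg (abs_nonneg (x j)) q)).mp hB0.symm j (mem_univ j)
      have h2 : |x j| = 0 := by
        by_contra hne
        exact absurd h1 (ne_of_gt (Real.rpow_pos_of_pos (lt_of_le_of_ne (abs_nonneg _) (Ne.symm hne)) q))
      simpa using h2
    have hx : IsSparse s x := ⟨∅, by simp, fun j _ => hx0 j⟩
    refine (bestApprox_le hx).trans ?_
    have h0 : lpNorm p (x - x) = 0 := by
      simp [_root_.lpNorm, Real.zero_rpow hp0, Real.zero_rpow (one_div_ne_zero hp0), Real.zero_rpow (inv_ne_zero hp0)]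
    rw [h0]; exact hRHS
  -- main case
  obtain ⟨T, hTcard, hTtop⟩ := exists_top_set (fun j => |x j| ^ q) s hNs.le
  set y : Fin N → ℝ := fun j => if j ∈ T then x j else 0 with hy
  have hysp : IsSparse s y := ⟨T, hTcard.le, fun j hj => if_neg hj⟩
  refine (bestApprox_le hysp).trans ?_
  have hxy : ∀ j, (x - y) j = if j ∈ T then 0 else x j := by
    intro j
    simp only [Pi.sub_apply, hy]
    split_ifs <;> ring
  have hsum : ∑ j, |(x - y) j| ^ p = ∑ j ∈ Tᶜ, |x j| ^ p := by
    rw [← Finset.sum_add_sum_compl T (fun j => |(x - y) j| ^ p)]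
    have e1 : ∑ j ∈ T, |(x - y) j| ^ p = 0 :=
      Finset.sum_eq_zero fun j hj => by rw [hxy j, if_pos hj]; simp [Real.zero_rpow hp0]
    have e2 : ∑ j ∈ Tᶜ, |(x - y) j| ^ p = ∑ j ∈ Tᶜ, |x j| ^ p :=
      Finset.sum_congr rfl fun j hj => by rw [hxy j, if_neg (Finset.mem_compl.mp hj)]
    rw [e1, e2, zero_add]
  set r : ℝ := (p - q) / q with hr
  have hr0 : 0 ≤ r := div_nonneg (by linarith) hq.le
  have hs0 : (0 : ℝ) < s := by exact_mod_cast hs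
  have hpt : ∀ j ∈ Tᶜ, |x j| ^ p ≤ (B / s) ^ r * |x j| ^ q := by
    intro j hj
    have hjT : j ∉ T := Finset.mem_compl.mp hj
    have hkey : (s : ℝ) * |x j| ^ q ≤ B := by
      have h1 : ∑ _i ∈ T, |x j| ^ q ≤ ∑ i ∈ T, |x i| ^ q :=
        Finset.sum_le_sum fun i hi => hTtop j hjT i hi
      have h2 : ∑ i ∈ T, |x i| ^ q ≤ B :=
        Finset.sum_le_sum_of_subset_of_nonneg (Finset.subset_univ T)
          (fun i _ _ => Real.rpow_nonneg (abs_nonneg _) _)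
      have h3 : ∑ _i ∈ T, |x j| ^ q = (s : ℝ) * |x j| ^ q := by
        rw [Finset.sum_const, hTcard, nsmul_eq_mul]
      linarith
    have hdiv : |x j| ^ q ≤ B / s := by
      rw [le_div_iff₀ hs0]; linarith
    calc |x j| ^ p = |x j| ^ (p - q) * |x j| ^ q := by
          rw [← Real.rpow_add' (abs_nonneg _) (by rw [sub_add_cancel]; exact hp0), sub_add_cancel]
      _ ≤ (B / s) ^ r * |x j| ^ q := by
          apply mul_le_mul_of_nonneg_right _ (Real.rpow_nonneg (abs_nonneg _) _)
          have e : |x j| ^ (p - q) = (|x j| ^ q) ^ r := by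
            rw [← Real.rpow_mul (abs_nonneg _)]
            congr 1
            rw [hr]; field_simp
          rw [e]
          exact Real.rpow_le_rpow (Real.rpow_nonneg (abs_nonneg _) _) hdiv hr0
  have hsum2 : ∑ j ∈ Tᶜ, |x j| ^ p ≤ (B / s) ^ r * B := by
    calc ∑ j ∈ Tᶜ, |x j| ^ p ≤ ∑ j ∈ Tᶜ, (B / s) ^ r * |x j| ^ q := Finset.sum_le_sum hpt
      _ = (B / s) ^ r * ∑ j ∈ Tᶜ, |x j| ^ q := by rw [Finset.mul_sum]
      _ ≤ (B / s) ^ r * B := by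
          apply mul_le_mul_of_nonneg_left _ (Real.rpow_nonneg (div_nonneg hBnn hs0.le) _)
          exact Finset.sum_le_sum_of_subset_of_nonneg (Finset.subset_univ _)
            (fun i _ _ => Real.rpow_nonneg (abs_nonneg _) _)
  have hfin : lpNorm p (x - y) ≤ ((B / s) ^ r * B) ^ (1 / p) := by
    rw [_root_.lpNorm, hsum]
    exact Real.rpow_le_rpow (Finset.sum_nonneg fun j _ => Real.rpow_nonneg (abs_nonneg _) _)
      hsum2 (by positivity)
  refine hfin.trans_eq ?_
  have hrw : (B / s) ^ r * B = B ^ (r + 1) * (s : ℝ) ^ (-r) := by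
    rw [Real.div_rpow hBnn hs0.le, Real.rpow_add hBpos, Real.rpow_one, Real.rpow_neg hs0.le]
    ring
  rw [hrw, Real.mul_rpow (by positivity) (by positivity), ← Real.rpow_mul hBnn,
    ← Real.rpow_mul hs0.le]
  have e1 : (r + 1) * (1 / p) = 1 / q := by rw [hr]; field_simp; ring
  have e2 : (-r) * (1 / p) = 1 / p - 1 / q := by linear_combination -e1
  rw [e1, e2]
  rw [mul_comm]
  rfl
end
end
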